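/- For the friendship graph F_n (n ≥ 2), the total domination polynomial satisfies D_t(F_n, x) = x(x+1)^{2n} + x^{2n} - x. -/

import Mathlib

open Finset

/-- `D` is a total dominating set of `G`: every vertex has a neighbor in `D`. -/
def IsTotalDomSet {V : Type*} (G : SimpleGraph V) (D : Finset V) : Prop :=
  ∀ v : V, ∃ u ∈ D, G.Adj v u

/-- `dt G i` is the number of total dominating sets of `G` of cardinality `i`. -/
noncomputable def dt {V : Type*} [Fintype V] (G : SimpleGraph V) (i : ℕ) : ℕ :=
  Nat.card {D : Finset V // D.card = i ∧ IsTotalDomSet G D}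

/-- The total domination polynomial of `G`, as a real function. -/
noncomputable def Dt {V : Type*} [Fintype V] (G : SimpleGraph V) (x : ℝ) : ℝ :=
  ∑ i ∈ Finset.range (Fintype.card V + 1), (dt G i : ℝ) * x ^ i

/-- The total domination number of `G`. -/
noncomputable def gammaT {V : Type*} (G : SimpleGraph V) : ℕ :=
  sInf {k : ℕ | ∃ D : Finset V, D.card = k ∧ IsTotalDomSet G D}

/-- The friendship graph `F n`: `n` triangles glued at the common vertex `0`.
For `1 ≤ i ≤ 2n`, vertices `2k+1` and `2k+2` form a triangle with `0`. -/
def friendshipGraph (n : ℕ) : SimpleGraph (Fin (2 * n + 1)) :=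
  SimpleGraph.fromRel (fun a b => a = 0 ∨ b = 0 ∨ (a.val + 1) / 2 = (b.val + 1) / 2)

/-- The partner of a leaf vertex in its triangle. -/
def FGpartner (n : ℕ) (v : Fin (2 * n + 1)) : Fin (2 * n + 1) :=
  ⟨if v.val % 2 = 1 then v.val + 1 else v.val - 1, by have := v.isLt; split <;> omega⟩

lemma FGpartner_spec (n : ℕ) (v : Fin (2 * n + 1)) (hv : v ≠ 0) :
    FGpartner n v ≠ 0 ∧ FGpartner n v ≠ v ∧
      ((FGpartner n v).val + 1) / 2 = (v.val + 1) / 2 := by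
  have h0 : v.val ≠ 0 := fun h => hv (Fin.ext (by simp [h]))
  have := v.isLt
  simp only [FGpartner, Ne, Fin.ext_iff, Fin.val_zero]
  split <;> omega

lemma FGpartner_unique (n : ℕ) (v u : Fin (2 * n + 1)) (hv : v ≠ 0) (hu : u ≠ 0)
    (hne : u ≠ FGpartner n v)
    (h : (u.val + 1) / 2 = ((FGpartner n v).val + 1) / 2) : u = v := by
  have h0 : v.val ≠ 0 := fun h => hv (Fin.ext (by simp [h]))
  have h0' : u.val ≠ 0 := fun h => hu (Fin.ext (by simp [h]))
  have := v.isLt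
  have := u.isLt
  have hne' : u.val ≠ (FGpartner n v).val := by simpa [Fin.ext_iff] using hne
  rw [Fin.ext_iff]
  simp only [FGpartner] at h hne'
  split at h <;> split at hne' <;> omega

lemma fg_adj {n : ℕ} (a b : Fin (2 * n + 1)) :
    (friendshipGraph n).Adj a b ↔
      a ≠ b ∧ (a = 0 ∨ b = 0 ∨ (a.val + 1) / 2 = (b.val + 1) / 2) := by
  unfold friendshipGraph
  rw [SimpleGraph.fromRel_adj]
  constructor
  · rintro ⟨h, h'⟩
    refine ⟨h, ?_⟩
    rcases h' with (h' | h' | h') | (h' | h' | h')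
    · exact Or.inl h'
    · exact Or.inr (Or.inl h')
    · exact Or.inr (Or.inr h')
    · exact Or.inr (Or.inl h')
    · exact Or.inl h'
    · exact Or.inr (Or.inr h'.symm)
  · rintro ⟨h, h'⟩
    exact ⟨h, Or.inl h'⟩

lemma td_iff {n : ℕ} (hn : 1 ≤ n) (D : Finset (Fin (2 * n + 1))) :
    IsTotalDomSet (friendshipGraph n) D ↔
      (0 ∈ D ∧ ∃ v ∈ D, v ≠ 0) ∨ D = Finset.univ.erase 0 := by
  constructor
  · intro hD
    by_cases h0 : (0 : Fin (2 * n + 1)) ∈ D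
    · left
      obtain ⟨u, hu, hadj⟩ := hD 0
      exact ⟨h0, u, hu, Ne.symm ((fg_adj 0 u).mp hadj).1⟩
    · right
      ext v
      simp only [Finset.mem_erase, Finset.mem_univ, and_true]
      constructor
      · intro hv
        exact fun h => h0 (h ▸ hv)
      · intro hv
        obtain ⟨u, hu, hadj⟩ := hD (FGpartner n v)
        obtain ⟨hp0, hpv, hp2⟩ := FGpartner_spec n v hv
        have hu0 : u ≠ 0 := fun h => h0 (h ▸ hu)
        obtain ⟨hne, hor⟩ := (fg_adj _ _).mp hadj
        have h2 : ((FGpartner n v).val + 1) / 2 = (u.val + 1) / 2 := by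
          rcases hor with h' | h' | h'
          · exact absurd h' hp0
          · exact absurd h' hu0
          · exact h'
        have : u = v := FGpartner_unique n v u hv hu0 (Ne.symm hne) h2.symm
        exact this ▸ hu
  · rintro (⟨h0, v, hv, hv0⟩ | rfl)
    · intro w
      by_cases hw : w = 0
      · exact ⟨v, hv, by rw [hw, fg_adj]; exact ⟨Ne.symm hv0, Or.inl rfl⟩⟩
      · exact ⟨0, h0, by rw [fg_adj]; exact ⟨hw, Or.inr (Or.inl rfl)⟩⟩
    · intro w
      by_cases hw : w = 0
      · refine ⟨⟨1, by omega⟩, ?_, ?_⟩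
        · simp [Finset.mem_erase, Fin.ext_iff]
        · rw [hw, fg_adj]
          refine ⟨?_, Or.inl rfl⟩
          simp [Fin.ext_iff]
      · obtain ⟨hp0, hpv, hp2⟩ := FGpartner_spec n w hw
        refine ⟨FGpartner n w, ?_, ?_⟩
        · simp [Finset.mem_erase, hp0]
        · rw [fg_adj]
          exact ⟨Ne.symm hpv, Or.inr (Or.inr hp2.symm)⟩

lemma card_filter_mem (n i : ℕ) (h2 : 2 ≤ i) :
    ((Finset.univ : Finset (Finset (Fin (2 * n + 1)))).filter
      (fun D => D.card = i ∧ (0 : Fin (2 * n + 1)) ∈ D)).card = Nat.choose (2 * n) (i - 1) := by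
  classical
  have hc : (Finset.univ.erase (0 : Fin (2 * n + 1))).card = 2 * n := by
    rw [Finset.card_erase_of_mem (Finset.mem_univ _), Finset.card_univ, Fintype.card_fin]
    omega
  have key : ((Finset.univ : Finset (Finset (Fin (2 * n + 1)))).filter
      (fun D => D.card = i ∧ (0 : Fin (2 * n + 1)) ∈ D)).card
      = (Finset.powersetCard (i - 1) (Finset.univ.erase (0 : Fin (2 * n + 1)))).card := by
    refine Finset.card_bij' (fun D _ => D.erase 0) (fun S _ => insert 0 S) ?_ ?_ ?_ ?_
    · intro D hD
      rw [Finset.mem_filter] at hD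
      rw [Finset.mem_powersetCard]
      exact ⟨Finset.erase_subset_erase _ (Finset.subset_univ D),
        by rw [Finset.card_erase_of_mem hD.2.2, hD.2.1]⟩
    · intro S hS
      rw [Finset.mem_powersetCard] at hS
      have h0S : (0 : Fin (2 * n + 1)) ∉ S := fun h =>
        (Finset.mem_erase.mp (hS.1 h)).1 rfl
      rw [Finset.mem_filter]
      refine ⟨Finset.mem_univ _, ?_, Finset.mem_insert_self _ _⟩
      rw [Finset.card_insert_of_notMem h0S, hS.2]
      omega
    · intro D hD
      rw [Finset.mem_filter] at hD
      exact Finset.insert_erase hD.2.2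
    · intro S hS
      rw [Finset.mem_powersetCard] at hS
      have h0S : (0 : Fin (2 * n + 1)) ∉ S := fun h =>
        (Finset.mem_erase.mp (hS.1 h)).1 rfl
      exact Finset.erase_insert h0S
  rw [key, Finset.card_powersetCard, hc]

lemma card_filter_eq_const {α : Type*} [DecidableEq α] [Fintype α] (c : Finset α) (i : ℕ) :
    ((Finset.univ : Finset (Finset α)).filter (fun D => D.card = i ∧ D = c)).card
      = if c.card = i then 1 else 0 := by
  split_ifs with h
  · rw [Finset.card_eq_one]
    refine ⟨c, ?_⟩
    ext D
    simp only [Finset.mem_filter, Finset.mem_univ, true_and, Finset.mem_singleton]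
    constructor
    · rintro ⟨-, rfl⟩; rfl
    · rintro rfl; exact ⟨h, rfl⟩
  · rw [Finset.card_eq_zero]
    ext D
    simp only [Finset.mem_filter, Finset.mem_univ, true_and, Finset.notMem_empty, iff_false]
    rintro ⟨h', rfl⟩
    exact h h'

lemma dt_fg (n : ℕ) (hn : 1 ≤ n) (i : ℕ) :
    dt (friendshipGraph n) i =
      (if 2 ≤ i then Nat.choose (2 * n) (i - 1) else 0) + (if i = 2 * n then 1 else 0) := by
  classical
  have hdt : dt (friendshipGraph n) i
      = ((Finset.univ : Finset (Finset (Fin (2 * n + 1)))).filter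
          (fun D => D.card = i ∧ IsTotalDomSet (friendshipGraph n) D)).card := by
    rw [dt, Nat.card_eq_fintype_card, Fintype.card_subtype]
  rw [hdt]
  have hpred : ∀ D : Finset (Fin (2 * n + 1)),
      (D.card = i ∧ IsTotalDomSet (friendshipGraph n) D) ↔
      ((D.card = i ∧ 0 ∈ D ∧ ∃ v ∈ D, v ≠ 0) ∨ (D.card = i ∧ D = Finset.univ.erase 0)) := by
    intro D
    rw [td_iff hn, and_or_left]
  rw [Finset.filter_congr (fun D _ => hpred D), Finset.filter_or,
    Finset.card_union_of_disjoint]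
  · have hQ : ((Finset.univ : Finset (Finset (Fin (2 * n + 1)))).filter
        (fun D => D.card = i ∧ D = Finset.univ.erase 0)).card
        = if i = 2 * n then 1 else 0 := by
      rw [card_filter_eq_const]
      have hc : (Finset.univ.erase (0 : Fin (2 * n + 1))).card = 2 * n := by
        rw [Finset.card_erase_of_mem (Finset.mem_univ _), Finset.card_univ, Fintype.card_fin]
        omega
      rw [hc]

      simp [eq_comm]
    rw [hQ]
    congr 1
    by_cases h2 : 2 ≤ i
    · rw [if_pos h2, ← card_filter_mem n i h2]
      congr 1
      apply Finset.filter_congr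
      intro D _
      simp only [and_congr_right_iff]
      intro hcard
      constructor
      · rintro ⟨h0, -⟩; exact h0
      · intro h0
        refine ⟨h0, ?_⟩
        have : 1 < D.card := by omega
        exact Finset.exists_mem_ne this 0
    · rw [if_neg h2]
      rw [Finset.card_eq_zero]
      ext D
      simp only [Finset.mem_filter, Finset.mem_univ, true_and, Finset.notMem_empty, iff_false]
      rintro ⟨hcard, h0, v, hv, hv0⟩
      have : 1 < D.card := Finset.one_lt_card.mpr ⟨0, h0, v, hv, Ne.symm hv0⟩
      omega
  · rw [Finset.disjoint_left]
    intro D hD hD'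
    rw [Finset.mem_filter] at hD hD'
    obtain ⟨-, -, h0, -⟩ := hD
    obtain ⟨-, -, rfl⟩ := hD'
    exact (Finset.mem_erase.mp h0).1 rfl

theorem friendship_total_domination_polynomial (n : ℕ) (hn : 2 ≤ n) (x : ℝ) :
    Dt (friendshipGraph n) x = x * (x + 1) ^ (2 * n) + x ^ (2 * n) - x := by
  have hn1 : 1 ≤ n := by omega
  unfold Dt
  rw [Fintype.card_fin]
  have hb : (x + 1) ^ (2 * n) = ∑ j ∈ range (2 * n + 1), ((2 * n).choose j : ℝ) * x ^ j := by
    rw [add_pow]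
    exact Finset.sum_congr rfl (fun j _ => by rw [one_pow]; ring)
  have hsplit : ∑ i ∈ range (2 * n + 1 + 1), (dt (friendshipGraph n) i : ℝ) * x ^ i
      = (∑ i ∈ range (2 * n + 2), (if 2 ≤ i then ((2 * n).choose (i - 1) : ℝ) else 0) * x ^ i)
        + ∑ i ∈ range (2 * n + 2), (if i = 2 * n then (1 : ℝ) else 0) * x ^ i := by
    rw [← Finset.sum_add_distrib]
    apply Finset.sum_congr rfl
    intro i _
    rw [dt_fg n hn1 i]
    split_ifs <;> push_cast <;> ring
  rw [hsplit]
  have h2nd : ∑ i ∈ range (2 * n + 2), (if i = 2 * n then (1 : ℝ) else 0) * x ^ i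
      = x ^ (2 * n) := by
    simp only [ite_mul, one_mul, zero_mul]
    rw [Finset.sum_ite_eq' (range (2 * n + 2)) (2 * n) (fun i => x ^ i)]
    simp
  have h1st : ∑ i ∈ range (2 * n + 2), (if 2 ≤ i then ((2 * n).choose (i - 1) : ℝ) else 0) * x ^ i
      = x * (x + 1) ^ (2 * n) - x := by
    have hR : x * (x + 1) ^ (2 * n)
        = (∑ i ∈ range (2 * n), ((2 * n).choose (i + 1) : ℝ) * x ^ (i + 2)) + x := by
      rw [hb, Finset.mul_sum,
        Finset.sum_range_succ' (fun j => x * (((2 * n).choose j : ℝ) * x ^ j)) (2 * n)]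
      congr 1
      · exact Finset.sum_congr rfl (fun i _ => by ring)
      · simp
    have hL : ∑ i ∈ range (2 * n + 2),
          (if 2 ≤ i then ((2 * n).choose (i - 1) : ℝ) else 0) * x ^ i
        = ∑ i ∈ range (2 * n), ((2 * n).choose (i + 1) : ℝ) * x ^ (i + 2) := by
      rw [Finset.sum_range_succ'
        (fun i => (if 2 ≤ i then ((2 * n).choose (i - 1) : ℝ) else 0) * x ^ i) (2 * n + 1),
        Finset.sum_range_succ'
        (fun i => (if 2 ≤ i + 1 then ((2 * n).choose (i + 1 - 1) : ℝ) else 0) * x ^ (i + 1)) (2 * n)]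
      norm_num
    rw [hL, hR]
    ring
  rw [h1st, h2nd]
  ring
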